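/- Electric quantum walk, non-marked case: let G be a bipartite graph with parts A, B, edge weights w_e > 0, extended by dangling edges u'u for u in the support of σ with weight σ_u. Let ψ_u = Σ_{e ∼ u} √w_e |e⟩ and let R_A (resp. R_B) be the product of reflections about ψ_u for u ∈ A (resp. u ∈ B). Then the vector Σ_{e ∈ E ∪ E'} √w_e |e⟩ is negated by R_A and has its E-part preserved by R_B in such a way that R_B R_A maps ξ ⊕ v to −ξ ⊕ v, where ξ = Σ_{u} √σ_u |u'u⟩ and v = Σ_{e ∈ E} √w_e |e⟩; hence the walk transduces ξ into −ξ with transduction complexity Σ_{e∈E} w_e. -/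

import Mathlib

private lemma ite_eval {ι : Type*} {c : Prop} [Decidable c]
    (f g : EuclideanSpace ℂ ι) (i : ι) :
    (if c then f else g) i = if c then f i else g i := by
  split <;> rfl

/-- **Electric quantum walk, non-marked case.** Let `G` be a finite bipartite graph with
parts `A, B`, edge set `E` (each `e ∈ E` having endpoints `endA e ∈ A`, `endB e ∈ B`),
extended by dangling edges `E'` incident to `A` (endpoint map `endD`, injective), with
positive weights `w` where the dangling weights are `σ` (summing to 1). With
`ψ_u = Σ_{e ∼ u} √w_e |e⟩`, let `R_A` (resp. `R_B`) be the reflection acting as `−1` on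
the span of `{ψ_u : u ∈ A}` (resp. `{ψ_u : u ∈ B}`) and `+1` on its orthogonal
complement. Then `R_B R_A` maps `ξ ⊕ v` to `−ξ ⊕ v`, where
`ξ = Σ_{u} √σ_u |u'u⟩` and `v = Σ_{e ∈ E} √w_e |e⟩`; hence the walk transduces `ξ`
into `−ξ` with transduction complexity `‖v‖² = Σ_{e ∈ E} w_e`. -/
theorem electric_walk_unmarked
    {E E' A B : Type*} [Fintype E] [Fintype E'] [Fintype A] [Fintype B]
    [DecidableEq E] [DecidableEq E'] [DecidableEq A] [DecidableEq B]
    (endA : E → A) (endB : E → B) (endD : E' → A) (hendD : Function.Injective endD)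
    (w : E ⊕ E' → ℝ) (hw : ∀ e, 0 < w e)
    (hσ : ∑ e' : E', w (Sum.inr e') = 1)
    (ψA : A → EuclideanSpace ℂ (E ⊕ E')) (ψB : B → EuclideanSpace ℂ (E ⊕ E'))
    (hψA : ∀ u : A, ψA u =
        (∑ e : E, if endA e = u then
            (Real.sqrt (w (Sum.inl e)) : ℂ) • EuclideanSpace.single (Sum.inl e) (1 : ℂ)
          else 0)
        + ∑ e' : E', if endD e' = u then
            (Real.sqrt (w (Sum.inr e')) : ℂ) • EuclideanSpace.single (Sum.inr e') (1 : ℂ)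
          else 0)
    (hψB : ∀ u : B, ψB u =
        ∑ e : E, if endB e = u then
            (Real.sqrt (w (Sum.inl e)) : ℂ) • EuclideanSpace.single (Sum.inl e) (1 : ℂ)
          else 0)
    (RA RB : EuclideanSpace ℂ (E ⊕ E') ≃ₗᵢ[ℂ] EuclideanSpace ℂ (E ⊕ E'))
    (hRA1 : ∀ u : A, RA (ψA u) = -ψA u)
    (hRA2 : ∀ x : EuclideanSpace ℂ (E ⊕ E'),
        (∀ u : A, (inner ℂ (ψA u) x : ℂ) = 0) → RA x = x)
    (hRB1 : ∀ u : B, RB (ψB u) = -ψB u)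
    (hRB2 : ∀ x : EuclideanSpace ℂ (E ⊕ E'),
        (∀ u : B, (inner ℂ (ψB u) x : ℂ) = 0) → RB x = x)
    (ξ v : EuclideanSpace ℂ (E ⊕ E'))
    (hξ : ξ = ∑ e' : E',
        (Real.sqrt (w (Sum.inr e')) : ℂ) • EuclideanSpace.single (Sum.inr e') (1 : ℂ))
    (hv : v = ∑ e : E,
        (Real.sqrt (w (Sum.inl e)) : ℂ) • EuclideanSpace.single (Sum.inl e) (1 : ℂ)) :
    RB (RA (ξ + v)) = -ξ + v ∧ ‖v‖ ^ 2 = ∑ e : E, w (Sum.inl e) := by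

  have hsumA : ∑ u : A, ψA u = v + ξ := by
    simp only [hψA, Finset.sum_add_distrib]
    congr 1
    · rw [Finset.sum_comm]
      simp [Finset.sum_ite_eq, hv]
    · rw [Finset.sum_comm]
      simp [Finset.sum_ite_eq, hξ]
  have hsumB : ∑ u : B, ψB u = v := by
    simp only [hψB]
    rw [Finset.sum_comm]
    simp [Finset.sum_ite_eq, hv]
  have h1 : RA (ξ + v) = -(ξ + v) := by
    have : RA (∑ u : A, ψA u) = -(∑ u : A, ψA u) := by
      rw [map_sum]
      simp [hRA1]
    rw [hsumA] at this
    rw [add_comm]; exact this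
  have hRBξ : RB ξ = ξ := by
    apply hRB2
    intro u
    rw [hψB, hξ]
    simp [inner_sum, sum_inner, inner_smul_left, inner_smul_right,
      EuclideanSpace.inner_single_left, EuclideanSpace.single_apply, ite_eval,
      PiLp.smul_apply, EuclideanSpace.inner_single_right]
  have hRBv : RB v = -v := by
    have : RB (∑ u : B, ψB u) = -(∑ u : B, ψB u) := by
      rw [map_sum]; simp [hRB1]
    rwa [hsumB] at this
  constructor
  · rw [h1, map_neg, map_add, hRBξ, hRBv]
    abel
  · have hin : (inner ℂ v v : ℂ) = ∑ e : E, (w (Sum.inl e) : ℂ) := by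
      rw [hv]
      simp only [inner_sum, sum_inner, inner_smul_left, inner_smul_right,
        EuclideanSpace.inner_single_left, EuclideanSpace.single_apply]
      simp [mul_comm, Finset.mul_sum, mul_ite, Finset.sum_ite_eq', Sum.inl.injEq,
        Complex.conj_ofReal, ← Complex.ofReal_mul, Real.mul_self_sqrt (hw _).le]
    have := @inner_self_eq_norm_sq ℂ _ _ _ _ v
    rw [← this, hin]
    simp
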